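/- Every polyhedrally constrained language is a finite disjoint union of linearly constrained languages. Consequently, the multivariate generating function of a polyhedrally constrained language is holonomic. -/

import Mathlib

/-- An atom over coordinates indexed by the alphabet `A`: a hyperplane or open
half-space in `ℤ^A`. -/
def CAtom {A : Type} [Fintype A] (E : Set (A → ℤ)) : Prop :=
  (∃ (a : A → ℤ) (b : ℤ), E = {v | (∑ i, a i * v i) = b}) ∨
  (∃ (a : A → ℤ) (b : ℤ), E = {v | (∑ i, a i * v i) > b})

/-- A linear constraint: a Boolean combination of atoms. -/
inductive CConstraint {A : Type} [Fintype A] : Set (A → ℤ) → Prop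
  | atom (E : Set (A → ℤ)) : CAtom E → CConstraint E
  | inter (P Q : Set (A → ℤ)) : CConstraint P → CConstraint Q → CConstraint (P ∩ Q)
  | union (P Q : Set (A → ℤ)) : CConstraint P → CConstraint Q → CConstraint (P ∪ Q)
  | compl (P : Set (A → ℤ)) : CConstraint P → CConstraint Pᶜ

/-- An elementary region in `ℤ^A`: additionally allows congruence conditions. -/
def ElementaryRegion {A : Type} [Fintype A] (E : Set (A → ℤ)) : Prop :=
  (∃ (a : A → ℤ) (b : ℤ), E = {v | (∑ i, a i * v i) = b}) ∨
  (∃ (a : A → ℤ) (b : ℤ), E = {v | (∑ i, a i * v i) > b}) ∨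
  (∃ (a : A → ℤ) (b c : ℤ), 0 < c ∧ E = {v | (∑ i, a i * v i) ≡ b [ZMOD c]})

/-- A polyhedral set: a finite disjoint union of finite intersections of
elementary regions. -/
def Polyhedral {A : Type} [Fintype A] (P : Set (A → ℤ)) : Prop :=
  ∃ (k : ℕ) (B : Fin k → Set (A → ℤ)),
    (∀ i, ∃ (l : ℕ) (E : Fin l → Set (A → ℤ)),
        (∀ j, ElementaryRegion (E j)) ∧ B i = ⋂ j, E j) ∧
    (∀ i j, i ≠ j → Disjoint (B i) (B j)) ∧
    P = ⋃ i, B i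

/-- The Parikh image of a word, as a vector of integers. -/
def parikh {A : Type} [DecidableEq A] (w : List A) : A → ℤ := fun a => (w.count a : ℤ)

/-- The constrained language `L(U, C) = {w ∈ U : Φ(w) ∈ C}`. -/
def constrained {A : Type} [DecidableEq A] (U : Set (List A)) (C : Set (A → ℤ)) :
    Set (List A) :=
  {w | w ∈ U ∧ parikh w ∈ C}

/-- A language is regular if it is accepted by a DFA with finitely many states. -/
def Regular {A : Type} (L : Set (List A)) : Prop :=
  ∃ (Q : Type) (_ : Fintype Q) (dfa : DFA A Q), dfa.accepts = L

/-- The multivariate generating function of a language, as a family of coefficients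
indexed by Parikh vectors: the coefficient at `d` counts the words of `L` with
Parikh image `d`. -/
noncomputable def genFun {A : Type} [DecidableEq A] (L : Set (List A)) :
    (A →₀ ℕ) → ℂ :=
  fun d => (Nat.card {w : List A // w ∈ L ∧ ∀ a, w.count a = d a} : ℂ)

/- ### Auxiliary lemmas -/
lemma catom_univ {A : Type} [Fintype A] : CAtom (Set.univ : Set (A → ℤ)) :=
  Or.inl ⟨0, 0, by ext v; simp⟩

lemma catom_empty {A : Type} [Fintype A] : CAtom (∅ : Set (A → ℤ)) :=
  Or.inr ⟨0, 0, by ext v; simp⟩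

lemma cconstraint_iInter {A : Type} [Fintype A] :
    ∀ (l : ℕ) (E : Fin l → Set (A → ℤ)),
      (∀ j, CConstraint (E j)) → CConstraint (⋂ j, E j) := by
  intro l
  induction l with
  | zero =>
    intro E _
    have : (⋂ j : Fin 0, E j) = Set.univ := by
      ext v; simp
    rw [this]; exact CConstraint.atom _ catom_univ
  | succ l ih =>
    intro E hE
    have : (⋂ j : Fin (l + 1), E j) = E 0 ∩ ⋂ j : Fin l, E j.succ := by
      ext v; simp [Fin.forall_fin_succ]
    rw [this]
    exact CConstraint.inter _ _ (hE 0) (ih _ fun j => hE j.succ)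

lemma regular_univ {A : Type} : Regular (Set.univ : Set (List A)) := by
  refine ⟨Unit, inferInstance, ⟨fun _ _ => (), (), Set.univ⟩, ?_⟩
  ext w; simp only [DFA.mem_accepts]; exact ⟨fun _ => trivial, fun _ => trivial⟩

lemma regular_inter {A : Type} (L M : Set (List A)) (hL : Regular L) (hM : Regular M) :
    Regular (L ∩ M) := by
  obtain ⟨Q1, f1, d1, h1⟩ := hL
  obtain ⟨Q2, f2, d2, h2⟩ := hM
  refine ⟨Q1 × Q2, inferInstance,
    ⟨fun p x => (d1.step p.1 x, d2.step p.2 x), (d1.start, d2.start),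
      {p | p.1 ∈ d1.accept ∧ p.2 ∈ d2.accept}⟩, ?_⟩
  have key : ∀ (w : List A) (p : Q1 × Q2),
      DFA.evalFrom ⟨fun p x => (d1.step p.1 x, d2.step p.2 x), (d1.start, d2.start),
        {p | p.1 ∈ d1.accept ∧ p.2 ∈ d2.accept}⟩ p w
        = (d1.evalFrom p.1 w, d2.evalFrom p.2 w) := by
    intro w
    induction w with
    | nil => intro p; rfl
    | cons x w ih => intro p; exact ih _
  ext w
  simp only [DFA.mem_accepts, DFA.eval, key, ← h1, ← h2]
  rfl

lemma regular_iInter {A : Type} :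
    ∀ (l : ℕ) (F : Fin l → Set (List A)),
      (∀ j, Regular (F j)) → Regular (⋂ j, F j) := by
  intro l
  induction l with
  | zero =>
    intro F _
    have : (⋂ j : Fin 0, F j) = Set.univ := by ext w; simp
    rw [this]; exact regular_univ
  | succ l ih =>
    intro F hF
    have : (⋂ j : Fin (l + 1), F j) = F 0 ∩ ⋂ j : Fin l, F j.succ := by
      ext w; simp [Fin.forall_fin_succ]
    rw [this]
    exact regular_inter _ _ (hF 0) (ih _ fun j => hF j.succ)

lemma regular_congruence {A : Type} [Fintype A] [DecidableEq A]
    (a : A → ℤ) (b c : ℤ) (hc : 0 < c) :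
    Regular {w : List A | (∑ i, a i * parikh w i) ≡ b [ZMOD c]} := by
  set m := c.toNat with hm
  haveI : NeZero m := ⟨by omega⟩
  refine ⟨ZMod m, inferInstance,
    ⟨fun s x => s + (a x : ZMod m), 0, {s | s = (b : ZMod m)}⟩, ?_⟩
  have count_sum : ∀ (x : A) (w : List A),
      (∑ i, a i * ((x :: w).count i : ℤ)) = a x + ∑ i, a i * (w.count i : ℤ) := by
    intro x w
    have : ∀ i : A, a i * ((x :: w).count i : ℤ)
        = (if i = x then a i else 0) + a i * (w.count i : ℤ) := by
      intro i
      rcases eq_or_ne i x with h | h <;> simp [h, eq_comm (a := x), List.count_cons, mul_add]; ring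
    simp only [this, Finset.sum_add_distrib, Finset.sum_ite_eq', Finset.mem_univ, if_true]
  have key : ∀ (w : List A) (s : ZMod m),
      DFA.evalFrom ⟨fun s x => s + (a x : ZMod m), 0, {s | s = (b : ZMod m)}⟩ s w
        = s + ((∑ i, a i * (w.count i : ℤ) : ℤ) : ZMod m) := by
    intro w
    induction w with
    | nil => intro s; simp [DFA.evalFrom]
    | cons x w ih =>
      intro s
      have h0 : DFA.evalFrom ⟨fun s x => s + (a x : ZMod m), 0, {s | s = (b : ZMod m)}⟩ s (x :: w)
          = DFA.evalFrom ⟨fun s x => s + (a x : ZMod m), 0, {s | s = (b : ZMod m)}⟩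
            (s + (a x : ZMod m)) w := rfl
      rw [h0, ih, count_sum]
      push_cast
      ring
  ext w
  simp only [DFA.mem_accepts, DFA.eval, key, Set.mem_setOf_eq, zero_add]
  rw [ZMod.intCast_eq_intCast_iff]
  have h1 : (m : ℤ) = c := Int.toNat_of_nonneg hc.le
  rw [h1]
  rfl

lemma slice_finite {A : Type} [Fintype A] [DecidableEq A] (L : Set (List A)) (d : A →₀ ℕ) :
    {w : List A | w ∈ L ∧ ∀ a, w.count a = d a}.Finite := by
  apply (List.finite_length_eq A (∑ a, d a)).subset
  rintro w ⟨-, hw⟩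
  have : w.length = ∑ a, w.count a := by
    classical
    have h2 := Multiset.sum_count_eq_card
      (s := (Finset.univ : Finset A)) (m := (w : Multiset A))
      (fun a _ => Finset.mem_univ a)
    simpa using h2.symm
  simp only [Set.mem_setOf_eq, this]
  exact Finset.sum_congr rfl fun a _ => hw a

lemma genFun_union {A : Type} [Fintype A] [DecidableEq A] (L M : Set (List A))
    (h : Disjoint L M) : genFun (L ∪ M) = genFun L + genFun M := by
  funext d
  have hL := slice_finite L d
  have hM := slice_finite M d
  have hdisj : Disjoint {w : List A | w ∈ L ∧ ∀ a, w.count a = d a}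
      {w : List A | w ∈ M ∧ ∀ a, w.count a = d a} := by
    rw [Set.disjoint_left]
    rintro w ⟨h1, -⟩ ⟨h2, -⟩
    exact Set.disjoint_left.mp h h1 h2
  have hunion : {w : List A | w ∈ L ∪ M ∧ ∀ a, w.count a = d a}
      = {w : List A | w ∈ L ∧ ∀ a, w.count a = d a}
        ∪ {w : List A | w ∈ M ∧ ∀ a, w.count a = d a} := by
    ext w; simp [Set.mem_union, and_or_right]
  show ((Nat.card {w : List A // w ∈ L ∪ M ∧ ∀ a, w.count a = d a} : ℕ) : ℂ) = _
  have : Nat.card {w : List A // w ∈ L ∪ M ∧ ∀ a, w.count a = d a}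
      = Nat.card {w : List A // w ∈ L ∧ ∀ a, w.count a = d a}
        + Nat.card {w : List A // w ∈ M ∧ ∀ a, w.count a = d a} := by
    have e1 : Nat.card {w : List A // w ∈ L ∪ M ∧ ∀ a, w.count a = d a}
        = ({w : List A | w ∈ L ∪ M ∧ ∀ a, w.count a = d a}).ncard :=
      Nat.card_coe_set_eq _
    rw [e1, hunion, Set.ncard_union_eq hdisj hL hM,
      ← Nat.card_coe_set_eq, ← Nat.card_coe_set_eq]
    rfl
  simp only [genFun, Pi.add_apply, this]
  push_cast
  rfl

lemma holonomic_iUnion {A : Type} [Fintype A] [DecidableEq A]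
    (Unambiguous : Set (List A) → Prop)
    (Holonomic : ((A →₀ ℕ) → ℂ) → Prop)
    (hMassazza : ∀ (U : Set (List A)) (C : Set (A → ℤ)),
      Unambiguous U → CConstraint C → Holonomic (genFun (constrained U C)))
    (hadd : ∀ f g : (A →₀ ℕ) → ℂ, Holonomic f → Holonomic g → Holonomic (f + g))
    (U0 : Set (List A)) (hU0 : Unambiguous U0) :
    ∀ (k : ℕ) (V : Fin k → Set (List A)) (C : Fin k → Set (A → ℤ)),
      (∀ i, Unambiguous (V i)) → (∀ i, CConstraint (C i)) →
      (∀ i j, i ≠ j → Disjoint (constrained (V i) (C i)) (constrained (V j) (C j))) →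
      Holonomic (genFun (⋃ i, constrained (V i) (C i))) := by
  intro k
  induction k with
  | zero =>
    intro V C _ _ _
    have h0 : (⋃ i : Fin 0, constrained (V i) (C i)) = constrained U0 (∅ : Set (A → ℤ)) := by
      ext w; simp [constrained]
    rw [h0]
    exact hMassazza _ _ hU0 (CConstraint.atom _ catom_empty)
  | succ k ih =>
    intro V C hV hC hdisj
    have h0 : (⋃ i : Fin (k + 1), constrained (V i) (C i))
        = constrained (V 0) (C 0) ∪ ⋃ i : Fin k, constrained (V i.succ) (C i.succ) := by
      ext w; simp [Fin.exists_fin_succ]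
    rw [h0]
    have hd : Disjoint (constrained (V 0) (C 0))
        (⋃ i : Fin k, constrained (V i.succ) (C i.succ)) := by
      rw [Set.disjoint_iUnion_right]
      intro i
      exact hdisj 0 i.succ (Fin.succ_ne_zero i).symm
    rw [genFun_union _ _ hd]
    exact hadd _ _ (hMassazza _ _ (hV 0) (hC 0))
      (ih _ _ (fun i => hV i.succ) (fun i => hC i.succ)
        (fun i j hij => hdisj i.succ j.succ (by simpa using hij)))

/-- Every polyhedrally constrained language is a finite disjoint union of linearly
constrained languages; consequently (granting Massazza's theorem that linearly
constrained languages have holonomic generating functions, and closure of holonomic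
functions under addition, and closure of unambiguous context-free languages under
intersection with regular languages) its multivariate generating function is
holonomic. -/
theorem polyhedrally_constrained_decomposition_and_holonomic
    {A : Type} [Fintype A] [DecidableEq A]
    (Unambiguous : Set (List A) → Prop)
    (Holonomic : ((A →₀ ℕ) → ℂ) → Prop)
    (hclosure : ∀ U R : Set (List A), Unambiguous U → Regular R → Unambiguous (U ∩ R))
    (hMassazza : ∀ (U : Set (List A)) (C : Set (A → ℤ)),
      Unambiguous U → CConstraint C → Holonomic (genFun (constrained U C)))
    (hadd : ∀ f g : (A →₀ ℕ) → ℂ, Holonomic f → Holonomic g → Holonomic (f + g))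
    (U : Set (List A)) (P : Set (A → ℤ))
    (hU : Unambiguous U) (hP : Polyhedral P) :
    (∃ (k : ℕ) (V : Fin k → Set (List A)) (C : Fin k → Set (A → ℤ)),
        (∀ i, Unambiguous (V i)) ∧ (∀ i, CConstraint (C i)) ∧
        (∀ i j, i ≠ j →
          Disjoint (constrained (V i) (C i)) (constrained (V j) (C j))) ∧
        constrained U P = ⋃ i, constrained (V i) (C i)) ∧
    Holonomic (genFun (constrained U P)) := by
  classical
  obtain ⟨k, B, hB, hBdisj, hPeq⟩ := hP
  -- for each i, choose the data
  choose l E hE hBi using hB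
  -- split each elementary region into its atom part and its congruence part
  set E' : ∀ i : Fin k, Fin (l i) → Set (A → ℤ) :=
    fun i j => if CAtom (E i j) then E i j else Set.univ with hE'def
  set F' : ∀ i : Fin k, Fin (l i) → Set (A → ℤ) :=
    fun i j => if CAtom (E i j) then Set.univ else E i j with hF'def
  have hsplit : ∀ i j, E' i j ∩ F' i j = E i j := by
    intro i j
    by_cases h : CAtom (E i j) <;> simp [hE'def, hF'def, h]
  have hE'atom : ∀ i j, CAtom (E' i j) := by
    intro i j
    by_cases h : CAtom (E i j) <;> simp [hE'def, h, catom_univ]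
  have hF'reg : ∀ i j, Regular {w : List A | parikh w ∈ F' i j} := by
    intro i j
    by_cases h : CAtom (E i j)
    · have : {w : List A | parikh w ∈ F' i j} = Set.univ := by
        simp [hF'def, h]
      rw [this]; exact regular_univ
    · have hcong : ∃ (a : A → ℤ) (b c : ℤ), 0 < c ∧
          E i j = {v | (∑ x, a x * v x) ≡ b [ZMOD c]} := by
        rcases hE i j with h1 | h1 | h1
        · exact absurd (Or.inl h1) h
        · exact absurd (Or.inr h1) h
        · exact h1
      obtain ⟨a, b, c, hc, hEij⟩ := hcong
      have : {w : List A | parikh w ∈ F' i j}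
          = {w : List A | (∑ x, a x * parikh w x) ≡ b [ZMOD c]} := by
        simp only [hF'def, if_neg h, hEij]
        rfl
      rw [this]
      exact regular_congruence a b c hc
  -- define the decomposition
  set R : Fin k → Set (List A) := fun i => ⋂ j, {w : List A | parikh w ∈ F' i j} with hRdef
  set V : Fin k → Set (List A) := fun i => U ∩ R i with hVdef
  set C : Fin k → Set (A → ℤ) := fun i => ⋂ j, E' i j with hCdef
  have hVi : ∀ i, Unambiguous (V i) := by
    intro i
    exact hclosure U (R i) hU (regular_iInter _ _ fun j => hF'reg i j)
  have hCi : ∀ i, CConstraint (C i) :=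
    fun i => cconstraint_iInter _ _ fun j => CConstraint.atom _ (hE'atom i j)
  have hkey : ∀ i, constrained (V i) (C i) = constrained U (B i) := by
    intro i
    ext w
    simp only [constrained, Set.mem_setOf_eq, hVdef, hCdef, hRdef, Set.mem_inter_iff,
      Set.mem_iInter, Set.mem_setOf_eq, hBi i]
    constructor
    · rintro ⟨⟨hwU, hwR⟩, hwC⟩
      refine ⟨hwU, ?_⟩
      intro j
      rw [← hsplit i j]
      exact ⟨hwC j, hwR j⟩
    · rintro ⟨hwU, hwB⟩
      refine ⟨⟨hwU, fun j => ?_⟩, fun j => ?_⟩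
      · have := hwB j; rw [← hsplit i j] at this; exact this.2
      · have := hwB j; rw [← hsplit i j] at this; exact this.1
  have hdisj2 : ∀ i j, i ≠ j →
      Disjoint (constrained (V i) (C i)) (constrained (V j) (C j)) := by
    intro i j hij
    rw [hkey i, hkey j]
    rw [Set.disjoint_left]
    rintro w ⟨-, hw1⟩ ⟨-, hw2⟩
    exact Set.disjoint_left.mp (hBdisj i j hij) hw1 hw2
  have hunion : constrained U P = ⋃ i, constrained (V i) (C i) := by
    have h1 : constrained U P = ⋃ i, constrained U (B i) := by
      ext w
      simp only [constrained, Set.mem_setOf_eq, hPeq, Set.mem_iUnion]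
      tauto
    rw [h1]
    exact Set.iUnion_congr fun i => (hkey i).symm
  refine ⟨⟨k, V, C, hVi, hCi, hdisj2, hunion⟩, ?_⟩
  rw [hunion]
  exact holonomic_iUnion Unambiguous Holonomic hMassazza hadd U hU k V C hVi hCi hdisj2
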